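/- Let G=(V,E) be a graph in which every vertex has finite degree, let j ≥ 3 and let y ∈ V. For each neighbor x of y let t̃_j(x,y) be the number of proper closed paths of length j with a tail whose first edge is (x,y). Let t_{j−2}(y) be the number of proper closed paths of length j−2 with a tail starting at y, and let a_{j−2}(y,y) be the number of proper closed paths of length j−2 starting at y. Then Σ_{x : x ∼ y} t̃_j(x,y) = (deg(y) − 1)·t_{j−2}(y) + (deg(y) − 2)·(a_{j−2}(y,y) − t_{j−2}(y)). -/

import Mathlib

/-- A closed path of length `n`, encoded as an `n`-periodic sequence of
adjacent vertices; its edges are `e_i = (c (i-1), c i)` for `1 ≤ i ≤ n`. -/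
def IsClosedPath {V : Type*} (G : SimpleGraph V) (n : ℕ) (c : ℕ → V) : Prop :=
  (∀ i, c (i + n) = c i) ∧ ∀ i, G.Adj (c i) (c (i + 1))

/-- A closed path of length `n` is proper (backtrack-free) if `e_{i+1} ≠ ē_i`
for `1 ≤ i ≤ n−1`, i.e. `c (i+2) ≠ c i` for `i + 2 ≤ n`. -/
def IsProperClosed {V : Type*} (n : ℕ) (c : ℕ → V) : Prop :=
  ∀ i, i + 2 ≤ n → c (i + 2) ≠ c i

/-- A closed path of length `n` has a tail if `e_n = ē_1`,
i.e. `c (n−1) = c 1`. -/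
def HasTail {V : Type*} (n : ℕ) (c : ℕ → V) : Prop := c (n - 1) = c 1

/-- `tailCountFrom G j x y`: the number of proper closed paths of length `j`
with a tail whose first edge is `(x, y)`. -/
noncomputable def tailCountFrom {V : Type*} (G : SimpleGraph V) (j : ℕ) (x y : V) : ℕ :=
  Nat.card {c : ℕ → V //
    IsClosedPath G j c ∧ IsProperClosed j c ∧ HasTail j c ∧ c 0 = x ∧ c 1 = y}

/-- `tailCount G j x`: the number of proper closed paths of length `j` with a
tail starting at `x`. -/
noncomputable def tailCount {V : Type*} (G : SimpleGraph V) (j : ℕ) (x : V) : ℕ :=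
  Nat.card {c : ℕ → V // IsClosedPath G j c ∧ IsProperClosed j c ∧ HasTail j c ∧ c 0 = x}

/-- `properClosedCount G j x` (= `a_j(x,x)`): the number of proper closed paths
of length `j` starting at `x`. -/
noncomputable def properClosedCount {V : Type*} (G : SimpleGraph V) (j : ℕ) (x : V) : ℕ :=
  Nat.card {c : ℕ → V // IsClosedPath G j c ∧ IsProperClosed j c ∧ c 0 = x}

lemma per_mod {α : Type*} {c : ℕ → α} {n : ℕ} (h : ∀ i, c (i + n) = c i) (hn : 0 < n) :
    ∀ i, c i = c (i % n) := by
  intro i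
  induction i using Nat.strong_induction_on with
  | _ i ih =>
    rcases lt_or_ge i n with h' | h'
    · rw [Nat.mod_eq_of_lt h']
    · have hi : i - n + n = i := Nat.sub_add_cancel h'
      calc c i = c (i - n + n) := by rw [hi]
        _ = c (i - n) := h _
        _ = c ((i - n) % n) := ih _ (by omega)
        _ = c (i % n) := by rw [← Nat.mod_eq_sub_mod h']
lemma succ_mod (n i : ℕ) (hn : 0 < n) : (i + 1) % n = (i % n + 1) % n := by
  conv_lhs => rw [show i + 1 = i % n + 1 + n * (i / n) by
    rw [Nat.add_right_comm, Nat.mod_add_div]]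
  exact Nat.add_mul_mod_self_left _ _ _
lemma tailCountFrom_eq {V : Type*} (G : SimpleGraph V) {n : ℕ} (hn : 1 ≤ n)
    {x y : V} (hxy : G.Adj x y) :
    tailCountFrom G (n + 2) x y =
      Nat.card {d : ℕ → V // IsClosedPath G n d ∧ IsProperClosed n d ∧ d 0 = y ∧
        d 1 ≠ x ∧ d (n - 1) ≠ x} := by
  refine Nat.card_congr
    ⟨fun c => ⟨fun i => c.1 (i % n + 1), ?_⟩,
     fun d => ⟨fun i => if i % (n + 2) = 0 then x else d.1 (i % (n + 2) - 1), ?_⟩, ?_, ?_⟩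
  · -- forward properties
    obtain ⟨⟨hper, hadj⟩, hp, ht, h0, h1⟩ := c.2
    have ht' : c.1 (n + 1) = c.1 1 := ht
    refine ⟨⟨?_, ?_⟩, ?_, ?_, ?_, ?_⟩
    · intro i; simp [Nat.add_mod_right]
    · intro i
      simp only
      have hr : i % n < n := Nat.mod_lt _ (by omega)
      rw [succ_mod n i (by omega)]
      rcases Nat.lt_or_ge (i % n + 1) n with h | h
      · rw [Nat.mod_eq_of_lt h]
        exact hadj (i % n + 1)
      · have he : i % n + 1 = n := by omega
        rw [he, Nat.mod_self]
        have := hadj n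
        rw [ht'] at this
        exact this
    · intro i hi
      simp only
      rw [Nat.mod_eq_of_lt (show i < n by omega)]
      rcases Nat.lt_or_ge (i + 2) n with h | h
      · rw [Nat.mod_eq_of_lt h]
        exact hp (i + 1) (by omega)
      · have he : i + 2 = n := by omega
        rw [he, Nat.mod_self]
        have h2 := hp (i + 1) (by omega)
        rw [show i + 1 + 2 = n + 1 by omega, ht'] at h2
        exact h2
    · simp only [Nat.zero_mod]; exact h1
    · simp only
      rcases Nat.lt_or_ge 1 n with h | h
      · rw [Nat.mod_eq_of_lt h]
        have := hp 0 (by omega)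
        rw [h0] at this
        exact this
      · have he : n = 1 := by omega
        subst he
        simp only [Nat.mod_self, Nat.zero_add, h1]
        exact hxy.ne'
    · simp only
      rw [Nat.mod_eq_of_lt (by omega), show n - 1 + 1 = n by omega]
      have h2 := hp n (by omega)
      have h3 : c.1 (n + 2) = x := by
        have := hper 0; simpa [h0] using this
      intro hc
      exact h2 (h3.trans hc.symm)
  · -- backward properties
    obtain ⟨⟨hper, hadj⟩, hp, h0, h1x, hnx⟩ := d.2
    have hdn : d.1 n = y := by have := hper 0; simpa [h0] using this
    refine ⟨⟨?_, ?_⟩, ?_, ?_, ?_, ?_⟩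
    · intro i; simp [Nat.add_mod_right]
    · intro i
      simp only
      have hr : i % (n + 2) < n + 2 := Nat.mod_lt _ (by omega)
      rw [succ_mod (n + 2) i (by omega)]
      rcases Nat.eq_zero_or_pos (i % (n + 2)) with h | h
      · rw [h]
        have hone : (0 + 1) % (n + 2) = 1 := Nat.mod_eq_of_lt (by omega)
        rw [if_pos rfl, hone, if_neg one_ne_zero, show (1 : ℕ) - 1 = 0 from rfl, h0]
        exact hxy
      · rcases Nat.lt_or_ge (i % (n + 2) + 1) (n + 2) with h2 | h2
        · rw [Nat.mod_eq_of_lt h2, if_neg (by omega), if_neg (by omega)]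
          have := hadj (i % (n + 2) - 1)
          rw [show i % (n + 2) - 1 + 1 = i % (n + 2) + 1 - 1 by omega] at this
          exact this
        · have he : i % (n + 2) = n + 1 := by omega
          rw [he, Nat.mod_self, if_neg (by omega), if_pos rfl]
          rw [show n + 1 - 1 = n from rfl, hdn]
          exact hxy.symm
    · intro i hi
      simp only
      rw [Nat.mod_eq_of_lt (show i < n + 2 by omega)]
      rcases Nat.lt_or_ge (i + 2) (n + 2) with h | h
      · rw [Nat.mod_eq_of_lt h, if_neg (by omega)]
        rcases Nat.eq_zero_or_pos i with h3 | h3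
        · subst h3
          rw [if_pos rfl]
          simpa using h1x
        · rw [if_neg (by omega)]
          have := hp (i - 1) (by omega)
          rw [show i - 1 + 2 = i + 2 - 1 by omega] at this
          exact this
      · have he : i = n := by omega
        subst he
        rw [Nat.mod_self, if_pos rfl, if_neg (by omega)]
        exact Ne.symm hnx
    · show (if (n + 2 - 1) % (n + 2) = 0 then x else d.1 ((n + 2 - 1) % (n + 2) - 1))
        = (if 1 % (n + 2) = 0 then x else d.1 (1 % (n + 2) - 1))
      rw [show n + 2 - 1 = n + 1 from rfl, Nat.mod_eq_of_lt (show n + 1 < n + 2 by omega),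
        if_neg (by omega), Nat.mod_eq_of_lt (show 1 < n + 2 by omega), if_neg (by omega),
        show n + 1 - 1 = n from rfl, show (1 : ℕ) - 1 = 0 from rfl, hdn, h0]
    · simp
    · simp only [Nat.mod_eq_of_lt (show 1 < n + 2 by omega), if_neg (one_ne_zero)]
      exact h0
  · -- left inverse
    intro c
    obtain ⟨⟨hper, hadj⟩, hp, ht, h0, h1⟩ := c.2
    have ht' : c.1 (n + 1) = c.1 1 := ht
    apply Subtype.ext
    funext i
    have hc := per_mod hper (show 0 < n + 2 by omega) i
    simp only
    rcases Nat.eq_zero_or_pos (i % (n + 2)) with h | h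
    · rw [if_pos h, hc, h, h0]
    · rw [if_neg (by omega)]
      have hr : i % (n + 2) < n + 2 := Nat.mod_lt _ (by omega)
      rcases Nat.lt_or_ge (i % (n + 2) - 1) n with h2 | h2
      · rw [Nat.mod_eq_of_lt h2, show i % (n + 2) - 1 + 1 = i % (n + 2) by omega, ← hc]
      · have he : i % (n + 2) - 1 = n := by omega
        rw [he, Nat.mod_self, hc, show i % (n + 2) = n + 1 by omega]
        exact ht'.symm
  · -- right inverse
    intro d
    obtain ⟨⟨hper, hadj⟩, hp, h0, h1x, hnx⟩ := d.2
    apply Subtype.ext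
    funext i
    have hr : i % n < n := Nat.mod_lt _ (by omega)
    simp only
    rw [Nat.mod_eq_of_lt (show i % n + 1 < n + 2 by omega), if_neg (by omega),
      Nat.add_sub_cancel]
    exact (per_mod hper (by omega) i).symm

lemma closedPaths_finite {V : Type*} (G : SimpleGraph V) (hfin : G.LocallyFinite)
    {n : ℕ} (hn : 0 < n) (y : V) :
    {d : ℕ → V | (∀ i, d (i + n) = d i) ∧ (∀ i, G.Adj (d i) (d (i + 1))) ∧ d 0 = y}.Finite := by
  classical
  letI : ∀ v : V, Fintype (G.neighborSet v) := hfin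
  set A : ℕ → Finset V := fun k =>
    Nat.rec ({y} : Finset V) (fun _ s => s ∪ s.biUnion (fun v => G.neighborFinset v)) k with hA
  have hmem : ∀ d ∈ {d : ℕ → V | (∀ i, d (i + n) = d i) ∧ (∀ i, G.Adj (d i) (d (i + 1))) ∧ d 0 = y},
      ∀ k, d k ∈ A k := by
    intro d hd k
    induction k with
    | zero => simp [hA, hd.2.2]
    | succ k ih =>
      have : d (k + 1) ∈ G.neighborFinset (d k) := by
        simp [SimpleGraph.mem_neighborFinset]
        exact hd.2.1 k
      exact Finset.mem_union_right _ (Finset.mem_biUnion.mpr ⟨d k, ih, this⟩)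
  have hmono : ∀ k m, k ≤ m → A k ⊆ A m := by
    intro k m hkm
    induction m with
    | zero => simp_all
    | succ m ih =>
      rcases Nat.lt_or_ge k (m+1) with h | h
      · exact (ih (by omega)).trans Finset.subset_union_left
      · have : k = m + 1 := by omega
        subst this; rfl
  rw [← Set.finite_coe_iff]
  apply Finite.of_injective
    (fun d : {d : ℕ → V | (∀ i, d (i + n) = d i) ∧ (∀ i, G.Adj (d i) (d (i + 1))) ∧ d 0 = y} =>
      (fun i : Fin n => (⟨d.1 i, hmono i n (le_of_lt i.2) (hmem d.1 d.2 i)⟩ : (A n : Finset V))))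
  intro d d' h
  ext i
  have h1 := d.2.1
  have h2 := d'.2.1
  rw [per_mod h1 hn i, per_mod h2 hn i]
  have := congrFun h ⟨i % n, Nat.mod_lt _ hn⟩
  exact congrArg Subtype.val this

/-- In a locally finite graph, for `j ≥ 3` and a vertex `y`:
`∑_{x ∼ y} t̃_j(x,y) = (deg(y) − 1)·t_{j−2}(y) + (deg(y) − 2)·(a_{j−2}(y,y) − t_{j−2}(y))`. -/
theorem tail_extension_count {V : Type*} (G : SimpleGraph V)
    (hfin : G.LocallyFinite) (j : ℕ) (hj : 3 ≤ j) (y : V) :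
    (∑ᶠ x ∈ G.neighborSet y, (tailCountFrom G j x y : ℤ))
      = (((G.neighborSet y).ncard : ℤ) - 1) * (tailCount G (j - 2) y : ℤ)
        + (((G.neighborSet y).ncard : ℤ) - 2)
          * ((properClosedCount G (j - 2) y : ℤ) - (tailCount G (j - 2) y : ℤ)) := by
  classical
  letI : ∀ v : V, Fintype (G.neighborSet v) := hfin
  set n := j - 2 with hn
  have hn1 : 1 ≤ n := by omega
  have hj2 : j = n + 2 := by omega
  clear_value n
  set N : Finset V := G.neighborFinset y with hN
  have hNset : G.neighborSet y = ↑N := by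
    rw [hN, SimpleGraph.neighborFinset_def, Set.coe_toFinset]
  have hPfin : {d : ℕ → V | IsClosedPath G n d ∧ IsProperClosed n d ∧ d 0 = y}.Finite := by
    apply Set.Finite.subset (closedPaths_finite G hfin (show 0 < n by omega) y)
    intro d hd
    exact ⟨hd.1.1, hd.1.2, hd.2.2⟩
  set Q : Finset (ℕ → V) := hPfin.toFinset with hQ
  have hQmem : ∀ d, d ∈ Q ↔ IsClosedPath G n d ∧ IsProperClosed n d ∧ d 0 = y := by
    intro d; rw [hQ, Set.Finite.mem_toFinset]; rfl
  have key : ∀ (S : Set (ℕ → V)) (T : (ℕ → V) → Prop) (_ : DecidablePred T),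
      (∀ d, d ∈ S ↔ (d ∈ Q ∧ T d)) → Nat.card ↥S = (Q.filter T).card := by
    intro S T instT hST
    have hSQ : S = ↑(Q.filter T) := by
      ext d; simp only [Finset.coe_filter, Set.mem_setOf_eq]; exact hST d
    rw [hSQ, Nat.card_coe_set_eq, Set.ncard_coe_finset]
  have ha : properClosedCount G n y = Q.card := by
    have h1 : properClosedCount G n y =
        Nat.card ↥{c : ℕ → V | IsClosedPath G n c ∧ IsProperClosed n c ∧ c 0 = y} := rfl
    have h2 : {c : ℕ → V | IsClosedPath G n c ∧ IsProperClosed n c ∧ c 0 = y} = ↑Q := by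
      ext d; simp only [Set.mem_setOf_eq, Finset.mem_coe]; rw [hQmem]
    rw [h1, h2, Nat.card_coe_set_eq, Set.ncard_coe_finset]
  have hti : tailCount G n y = (Q.filter (fun d => HasTail n d)).card := by
    have h1 : tailCount G n y = Nat.card
        ↥{c : ℕ → V | IsClosedPath G n c ∧ IsProperClosed n c ∧ HasTail n c ∧ c 0 = y} := rfl
    rw [h1]
    apply key
    intro d; simp only [Set.mem_setOf_eq, hQmem]; tauto
  have htx : ∀ x ∈ N, (tailCountFrom G j x y : ℤ)
      = ((Q.filter (fun d => d 1 ≠ x ∧ d (n - 1) ≠ x)).card : ℤ) := by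
    intro x hx
    have hadjxy : G.Adj x y := by
      rw [hN, SimpleGraph.mem_neighborFinset] at hx; exact hx.symm
    rw [hj2, tailCountFrom_eq G hn1 hadjxy]
    congr 1
    have h1 : Nat.card {d : ℕ → V // IsClosedPath G n d ∧ IsProperClosed n d ∧ d 0 = y ∧
        d 1 ≠ x ∧ d (n - 1) ≠ x} = Nat.card ↥{d : ℕ → V | IsClosedPath G n d ∧
        IsProperClosed n d ∧ d 0 = y ∧ d 1 ≠ x ∧ d (n - 1) ≠ x} := rfl
    rw [h1]
    apply key
    intro d; simp only [Set.mem_setOf_eq, hQmem]; tauto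
  -- rewrite the LHS finsum as a Finset sum
  rw [hNset, finsum_mem_coe_finset, Set.ncard_coe_finset]
  rw [Finset.sum_congr rfl htx]
  have step2 : ∑ x ∈ N, ((Q.filter (fun d => d 1 ≠ x ∧ d (n - 1) ≠ x)).card : ℤ)
      = ∑ x ∈ N, ∑ d ∈ Q, (if d 1 ≠ x ∧ d (n - 1) ≠ x then (1 : ℤ) else 0) := by
    refine Finset.sum_congr rfl fun x _ => ?_
    rw [Finset.card_filter]
    push_cast
    rfl
  rw [step2, Finset.sum_comm]
  have inner : ∀ d ∈ Q, ∑ x ∈ N, (if d 1 ≠ x ∧ d (n - 1) ≠ x then (1 : ℤ) else 0)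
      = ((N.card : ℤ) - 2) + (if d (n - 1) = d 1 then (1 : ℤ) else 0) := by
    intro d hdQ
    obtain ⟨⟨hper, hadj⟩, hp, h0⟩ := (hQmem d).1 hdQ
    have h1N : d 1 ∈ N := by
      rw [hN, SimpleGraph.mem_neighborFinset]
      have := hadj 0
      rwa [h0] at this
    have h2N : d (n - 1) ∈ N := by
      rw [hN, SimpleGraph.mem_neighborFinset]
      have hstep := hadj (n - 1)
      have hn0 : n - 1 + 1 = n := Nat.succ_pred_eq_of_pos hn1
      rw [hn0] at hstep
      have hdn : d n = y := by have := hper 0; simpa [h0] using this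
      rw [hdn] at hstep
      exact hstep.symm
    have hsub : ({d 1, d (n - 1)} : Finset V) ⊆ N := by
      intro z hz
      rcases Finset.mem_insert.mp hz with rfl | hz
      · exact h1N
      · rw [Finset.mem_singleton.mp hz]; exact h2N
    have hfilt : N.filter (fun x => d 1 ≠ x ∧ d (n - 1) ≠ x) = N \ {d 1, d (n - 1)} := by
      ext z
      simp only [Finset.mem_filter, Finset.mem_sdiff, Finset.mem_insert, Finset.mem_singleton]
      constructor
      · rintro ⟨hz, hz1, hz2⟩
        refine ⟨hz, ?_⟩
        rintro (rfl | rfl)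
        · exact hz1 rfl
        · exact hz2 rfl
      · rintro ⟨hz, hno⟩
        exact ⟨hz, fun h => hno (Or.inl h.symm), fun h => hno (Or.inr h.symm)⟩
    have hpair : ({d 1, d (n - 1)} : Finset V).card = if d (n - 1) = d 1 then 1 else 2 := by
      rcases eq_or_ne (d (n - 1)) (d 1) with h | h
      · rw [if_pos h, h]; simp
      · rw [if_neg h, Finset.card_pair (Ne.symm h)]
    have hle : (if d (n - 1) = d 1 then 1 else 2) ≤ N.card := by
      split_ifs
      · exact Nat.one_le_iff_ne_zero.mpr (Finset.card_ne_zero_of_mem h1N)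
      · calc 2 = ({d 1, d (n - 1)} : Finset V).card := by
              rw [hpair, if_neg (by assumption)]
          _ ≤ N.card := Finset.card_le_card hsub
    rw [← Finset.sum_filter, hfilt, Finset.sum_const, Finset.card_sdiff_of_subset hsub, hpair,
      nsmul_eq_mul, mul_one, Nat.cast_sub hle]
    push_cast
    split_ifs <;> ring
  rw [Finset.sum_congr rfl inner, Finset.sum_add_distrib, Finset.sum_const,
    nsmul_eq_mul]
  have hlast : ∑ d ∈ Q, (if d (n - 1) = d 1 then (1 : ℤ) else 0)
      = ((Q.filter (fun d => HasTail n d)).card : ℤ) := by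
    rw [Finset.card_filter]
    push_cast
    refine Finset.sum_congr rfl fun d _ => ?_
    simp [HasTail]
    congr 1
  rw [hlast, ha, ← hti]
  push_cast
  ring
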